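/- Deviation of the SAGA estimated gradient from the true partial gradient (Lemma 2): Suppose Assumption 2 holds. Then for every x ∈ ℝ^N, every table φ = (φ_1,…,φ_m) of points of ℝ^N, and every integer A ≥ 1, E_{σ,i}[ ‖(∂Ĝ(σ,x,φ))^T ∇F_i(Ĝ(σ,x,φ)) − (∂G(x))^T ∇F_i(G(x))‖² ] ≤ 2(B_F² L_G² + B_G⁴ L_F²) · (1/A) · (1/m)∑_{j=1}^m ‖x − φ_j‖². -/

import Mathlib

noncomputable section

open Finset
open scoped RealInnerProductSpace

abbrev Euc (N : ℕ) := EuclideanSpace ℝ (Fin N)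

/-- Frobenius norm of a linear map between Euclidean spaces: the square root of the
sum of the squared norms of the columns. -/
def frobNorm {N M : ℕ} (T : Euc N →L[ℝ] Euc M) : ℝ :=
  Real.sqrt (∑ j : Fin N, ‖T (EuclideanSpace.single j 1)‖ ^ 2)

/-- The averaged inner function `G = (1/m) ∑ⱼ Gⱼ`. -/
def Gbar {m N M : ℕ} (G : Fin m → Euc N → Euc M) (x : Euc N) : Euc M :=
  (m : ℝ)⁻¹ • ∑ j, G j x

/-- The averaged Jacobian `∂G = (1/m) ∑ⱼ ∂Gⱼ`. -/
def Jbar {m N M : ℕ} (J : Fin m → Euc N → (Euc N →L[ℝ] Euc M)) (x : Euc N) :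
    Euc N →L[ℝ] Euc M :=
  (m : ℝ)⁻¹ • ∑ j, J j x

/-- `Tᵀ v`: the transpose (adjoint) of `T` applied to `v`. -/
def transApp {N M : ℕ} (T : Euc N →L[ℝ] Euc M) (v : Euc M) : Euc N :=
  ContinuousLinearMap.adjoint T v

/-- Assumption 2 of the paper: bounded gradients, Lipschitz gradients, bounded
Jacobians (Frobenius norm), Lipschitz inner functions and Lipschitz Jacobians. -/
def Assumption2 {n m N M : ℕ} (G : Fin m → Euc N → Euc M)
    (J : Fin m → Euc N → (Euc N →L[ℝ] Euc M))
    (gradF : Fin n → Euc M → Euc M) (BF LF BG LG : ℝ) : Prop :=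
  (∀ i y, ‖gradF i y‖ ≤ BF) ∧
  (∀ i y y', ‖gradF i y - gradF i y'‖ ≤ LF * ‖y - y'‖) ∧
  (∀ j x, frobNorm (J j x) ≤ BG) ∧
  (∀ j x x', ‖G j x - G j x'‖ ≤ BG * ‖x - x'‖) ∧
  (∀ j x x', frobNorm (J j x - J j x') ≤ LG * ‖x - x'‖)

/-- Continuous differentiability of the data, with the prescribed Jacobians and
gradients. -/
def SmoothData {n m N M : ℕ} (Fi : Fin n → Euc M → ℝ) (G : Fin m → Euc N → Euc M)
    (J : Fin m → Euc N → (Euc N →L[ℝ] Euc M)) (gradF : Fin n → Euc M → Euc M) : Prop :=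
  (∀ j x, HasFDerivAt (G j) (J j x) x) ∧ (∀ j, Continuous (J j)) ∧
  (∀ i y, HasGradientAt (Fi i) (gradF i y) y) ∧ (∀ i, Continuous (gradF i))

/-- Uniform average over all tuples `σ ∈ {1,…,m}^A`. -/
def Esig {m A : ℕ} (f : (Fin A → Fin m) → ℝ) : ℝ :=
  (∑ σ : Fin A → Fin m, f σ) / (m ^ A : ℝ)

/-- The SAGA estimator `Ĝ(σ,x,φ)` of the inner function. -/
def GhatSAGA {m N M : ℕ} (G : Fin m → Euc N → Euc M) {A : ℕ}
    (σ : Fin A → Fin m) (x : Euc N) (φ : Fin m → Euc N) : Euc M :=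
  (A : ℝ)⁻¹ • ∑ l, (G (σ l) x - G (σ l) (φ (σ l))) + (m : ℝ)⁻¹ • ∑ j, G j (φ j)

/-- The SAGA estimator `∂Ĝ(σ,x,φ)` of the Jacobian. -/
def JhatSAGA {m N M : ℕ} (J : Fin m → Euc N → (Euc N →L[ℝ] Euc M)) {A : ℕ}
    (σ : Fin A → Fin m) (x : Euc N) (φ : Fin m → Euc N) : Euc N →L[ℝ] Euc M :=
  (A : ℝ)⁻¹ • ∑ l, (J (σ l) x - J (σ l) (φ (σ l))) + (m : ℝ)⁻¹ • ∑ j, J j (φ j)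

lemma sum_eval_aux {m : ℕ} {ι : Type*} [Fintype ι] [DecidableEq ι] (l : ι) (f : Fin m → ℝ) :
    ∑ σ : ι → Fin m, f (σ l)
      = (Fintype.card ({ j : ι // j ≠ l } → Fin m) : ℝ) * ∑ j, f j := by
  rw [← (Equiv.funSplitAt l (Fin m)).symm.sum_comp (fun σ => f (σ l))]
  simp [Fintype.sum_prod_type, Equiv.funSplitAt, Equiv.piSplitAt, Finset.sum_comm,
    Finset.sum_const, nsmul_eq_mul, mul_comm, ← Finset.sum_mul]

lemma sum_eval_pair_aux {m A : ℕ} {l l' : Fin A} (hll : l ≠ l') (g : Fin m → Fin m → ℝ)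
    (hg : ∑ j, ∑ j', g j j' = 0) :
    ∑ σ : Fin A → Fin m, g (σ l) (σ l') = 0 := by
  rw [← (Equiv.funSplitAt l (Fin m)).symm.sum_comp (fun σ => g (σ l) (σ l'))]
  have key : ∀ p : Fin m × ({ j : Fin A // j ≠ l } → Fin m),
      g (((Equiv.funSplitAt l (Fin m)).symm p) l) (((Equiv.funSplitAt l (Fin m)).symm p) l')
        = g p.1 (p.2 ⟨l', hll.symm⟩) := by
    intro p
    simp [Equiv.funSplitAt, Equiv.piSplitAt, hll.symm]
  rw [Fintype.sum_congr _ _ key]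
  rw [Fintype.sum_prod_type]
  have : ∀ a : Fin m, ∑ r : { j : Fin A // j ≠ l } → Fin m, g a (r ⟨l', hll.symm⟩)
      = (Fintype.card ({ j : { j : Fin A // j ≠ l } // j ≠ ⟨l', hll.symm⟩ } → Fin m) : ℝ)
        * ∑ b, g a b := fun a => sum_eval_aux _ _
  rw [Fintype.sum_congr _ _ this, ← Finset.mul_sum, hg, mul_zero]

lemma var_bound {E : Type*} [NormedAddCommGroup E] [InnerProductSpace ℝ E]
    {m A : ℕ} (hm : 0 < m) (hA : 0 < A) (h : Fin m → E) :
    Esig (fun σ : Fin A → Fin m =>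
      ‖(A:ℝ)⁻¹ • ∑ l, h (σ l) - (m:ℝ)⁻¹ • ∑ j, h j‖ ^ 2)
    ≤ (1/(A:ℝ)) * ((m:ℝ)⁻¹ * ∑ j, ‖h j‖ ^ 2) := by
  have hmR : (0:ℝ) < m := by exact_mod_cast hm
  have hAR : (0:ℝ) < A := by exact_mod_cast hA
  set c : E := (m:ℝ)⁻¹ • ∑ j, h j with hc
  set X : Fin m → E := fun j => h j - c with hX
  have hsum_h : ∑ j, h j = (m:ℝ) • c := by
    rw [hc, smul_smul, mul_inv_cancel₀ hmR.ne', one_smul]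
  have hX0 : ∑ j, X j = 0 := by
    simp only [hX, Finset.sum_sub_distrib, Finset.sum_const, Finset.card_univ,
      Fintype.card_fin, hsum_h]
    rw [← Nat.cast_smul_eq_nsmul ℝ, sub_self]
  have hdev : ∀ σ : Fin A → Fin m,
      (A:ℝ)⁻¹ • ∑ l, h (σ l) - (m:ℝ)⁻¹ • ∑ j, h j = (A:ℝ)⁻¹ • ∑ l, X (σ l) := by
    intro σ
    simp only [hX, Finset.sum_sub_distrib, Finset.sum_const, Finset.card_univ,
      Fintype.card_fin, smul_sub]
    rw [← Nat.cast_smul_eq_nsmul ℝ, smul_smul, inv_mul_cancel₀ hAR.ne', one_smul, hc]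
  have key : ∑ σ : Fin A → Fin m, ‖∑ l, X (σ l)‖ ^ 2
      = (A:ℝ) * (m:ℝ)^(A-1) * ∑ j, ‖X j‖ ^ 2 := by
    have expand : ∀ σ : Fin A → Fin m, ‖∑ l, X (σ l)‖ ^ 2
        = ∑ l, ∑ l', ⟪X (σ l), X (σ l')⟫ := by
      intro σ
      rw [← real_inner_self_eq_norm_sq, sum_inner]
      exact Finset.sum_congr rfl fun l _ => inner_sum _ _ _
    rw [Fintype.sum_congr _ _ expand]
    have swap : ∑ σ : Fin A → Fin m, ∑ l, ∑ l', ⟪X (σ l), X (σ l')⟫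
        = ∑ l, ∑ l', ∑ σ : Fin A → Fin m, ⟪X (σ l), X (σ l')⟫ := by
      rw [Finset.sum_comm]
      exact Finset.sum_congr rfl fun l _ => Finset.sum_comm
    rw [swap]
    have inner_val : ∀ l : Fin A, ∑ l', ∑ σ : Fin A → Fin m, ⟪X (σ l), X (σ l')⟫
        = (m:ℝ)^(A-1) * ∑ j, ‖X j‖ ^ 2 := by
      intro l
      rw [Finset.sum_eq_single_of_mem l (Finset.mem_univ l)]
      · have : ∑ σ : Fin A → Fin m, ⟪X (σ l), X (σ l)⟫
            = ∑ σ : Fin A → Fin m, (fun j => ‖X j‖ ^ 2) (σ l) := by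
          exact Finset.sum_congr rfl fun σ _ => real_inner_self_eq_norm_sq _
        refine this.trans ((sum_eval_aux (m := m) (ι := Fin A) l (fun j => ‖X j‖ ^ 2)).trans ?_)
        congr 1
        rw [Fintype.card_fun, Fintype.card_fin, Fintype.card_subtype_compl,
          Fintype.card_subtype_eq, Fintype.card_fin]
        push_cast
        ring
      · intro l' _ hne
        refine sum_eval_pair_aux hne.symm (fun j j' => ⟪X j, X j'⟫) ?_
        show ∑ j, ∑ j', ⟪X j, X j'⟫ = 0
        have hz : ∀ j : Fin m, ∑ j', ⟪X j, X j'⟫ = 0 := by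
          intro j
          rw [← inner_sum, hX0, inner_zero_right]
        simp [hz]
    rw [Fintype.sum_congr _ _ inner_val, Finset.sum_const, Finset.card_univ, Fintype.card_fin,
      nsmul_eq_mul, mul_assoc]
  have hXle : ∑ j, ‖X j‖ ^ 2 ≤ ∑ j, ‖h j‖ ^ 2 := by
    have expand : ∀ j, ‖X j‖ ^ 2 = ‖h j‖ ^ 2 - 2 * ⟪h j, c⟫ + ‖c‖ ^ 2 := by
      intro j
      rw [hX]
      exact norm_sub_sq_real _ _
    rw [Fintype.sum_congr _ _ expand]
    have hinner : ∑ j, ⟪h j, c⟫ = (m:ℝ) * ‖c‖ ^ 2 := by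
      rw [← sum_inner, hsum_h, real_inner_smul_left, real_inner_self_eq_norm_sq]
    have hc2 : (0:ℝ) ≤ (m:ℝ) * ‖c‖ ^ 2 := by positivity
    simp only [Finset.sum_add_distrib, Finset.sum_sub_distrib, ← Finset.mul_sum, hinner,
      Finset.sum_const, Finset.card_univ, Fintype.card_fin, nsmul_eq_mul]
    nlinarith
  have hEsig : Esig (fun σ : Fin A → Fin m =>
      ‖(A:ℝ)⁻¹ • ∑ l, h (σ l) - (m:ℝ)⁻¹ • ∑ j, h j‖ ^ 2)
      = (1/(A:ℝ)) * ((m:ℝ)⁻¹ * ∑ j, ‖X j‖ ^ 2) := by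
    unfold Esig
    have : ∀ σ : Fin A → Fin m,
        ‖(A:ℝ)⁻¹ • ∑ l, h (σ l) - (m:ℝ)⁻¹ • ∑ j, h j‖ ^ 2
        = (A:ℝ)⁻¹ ^ 2 * ‖∑ l, X (σ l)‖ ^ 2 := by
      intro σ
      rw [hdev σ, norm_smul, mul_pow, Real.norm_eq_abs, abs_of_nonneg (by positivity)]
    rw [Fintype.sum_congr _ _ this, ← Finset.mul_sum, key]
    have hpow : (m:ℝ) ^ A = (m:ℝ)^(A-1) * m := by
      rw [← pow_succ, Nat.sub_add_cancel hA]
    rw [hpow]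
    field_simp
  rw [hEsig]
  have h1 : (0:ℝ) < 1/(A:ℝ) := by positivity
  have h2 : (0:ℝ) < (m:ℝ)⁻¹ := by positivity
  exact mul_le_mul_of_nonneg_left (mul_le_mul_of_nonneg_left hXle h2.le) h1.le

def colMap {N M : ℕ} : (Euc N →L[ℝ] Euc M) →ₗ[ℝ] PiLp 2 (fun _ : Fin N => Euc M) where
  toFun T := WithLp.toLp 2 (fun j => T (EuclideanSpace.single j 1))
  map_add' S T := by ext j; simp
  map_smul' c T := by ext j; simp

lemma frob_eq_norm_colMap {N M : ℕ} (T : Euc N →L[ℝ] Euc M) :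
    frobNorm T = ‖colMap T‖ := by
  rw [PiLp.norm_eq_of_L2]
  rfl

lemma opNorm_le_frob {N M : ℕ} (T : Euc N →L[ℝ] Euc M) : ‖T‖ ≤ frobNorm T := by
  refine T.opNorm_le_bound (Real.sqrt_nonneg _) fun u => ?_
  have hu : u = ∑ j, u j • EuclideanSpace.single j (1:ℝ) := by
    ext i
    rw [WithLp.ofLp_sum, Finset.sum_apply]
    simp [EuclideanSpace.single_apply]
  calc ‖T u‖ = ‖∑ j, u j • T (EuclideanSpace.single j 1)‖ := by
        conv_lhs => rw [hu]
        rw [map_sum]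
        simp
    _ ≤ ∑ j, ‖u j • T (EuclideanSpace.single j 1)‖ := norm_sum_le _ _
    _ = ∑ j, |u j| * ‖T (EuclideanSpace.single j 1)‖ := by
        simp [norm_smul]
    _ ≤ frobNorm T * ‖u‖ := by
        have cs := Real.sum_mul_le_sqrt_mul_sqrt Finset.univ
          (fun j => |u j|) (fun j => ‖T (EuclideanSpace.single j 1)‖)
        have hnu : ‖u‖ = Real.sqrt (∑ j, |u j| ^ 2) := by
          rw [EuclideanSpace.norm_eq]
          simp [sq_abs]
        rw [hnu, frobNorm, mul_comm]
        simpa [sq_abs] using cs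

lemma transApp_norm_le {N M : ℕ} (T : Euc N →L[ℝ] Euc M) (v : Euc M) :
    ‖transApp T v‖ ≤ ‖T‖ * ‖v‖ := by
  unfold transApp
  calc ‖ContinuousLinearMap.adjoint T v‖ ≤ ‖ContinuousLinearMap.adjoint T‖ * ‖v‖ :=
        (ContinuousLinearMap.adjoint T).le_opNorm v
    _ = ‖T‖ * ‖v‖ := by rw [ContinuousLinearMap.adjoint.norm_map]

lemma esig_mono {m A : ℕ} (hm : 0 < m) {f g : (Fin A → Fin m) → ℝ}
    (h : ∀ σ, f σ ≤ g σ) : Esig f ≤ Esig g := by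
  unfold Esig
  have hpos : (0:ℝ) ≤ (m:ℝ)^A := by positivity
  exact div_le_div_of_nonneg_right (Finset.sum_le_sum fun σ _ => h σ) hpos

lemma esig_lincomb {m A : ℕ} (a b : ℝ) (f g : (Fin A → Fin m) → ℝ) :
    Esig (fun σ => a * f σ + b * g σ) = a * Esig f + b * Esig g := by
  unfold Esig
  rw [Finset.sum_add_distrib, ← Finset.mul_sum, ← Finset.mul_sum]
  ring

set_option maxHeartbeats 1000000 in
/-- Lemma 2: deviation of the SAGA estimated gradient from the true partial gradient. -/
theorem saga_gradient_deviation_bound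
    {n m N M A : ℕ} (hn : 0 < n) (hm : 0 < m) (hA : 0 < A)
    (BF LF BG LG : ℝ) (hBF : 0 < BF) (hLF : 0 < LF) (hBG : 0 < BG) (hLG : 0 < LG)
    (Fi : Fin n → Euc M → ℝ) (G : Fin m → Euc N → Euc M)
    (J : Fin m → Euc N → (Euc N →L[ℝ] Euc M)) (gradF : Fin n → Euc M → Euc M)
    (hsm : SmoothData Fi G J gradF)
    (hA2 : Assumption2 G J gradF BF LF BG LG)
    (x : Euc N) (φ : Fin m → Euc N) :
    (n : ℝ)⁻¹ * ∑ i, Esig (fun σ : Fin A → Fin m =>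
        ‖transApp (JhatSAGA J σ x φ) (gradF i (GhatSAGA G σ x φ)) -
          transApp (Jbar J x) (gradF i (Gbar G x))‖ ^ 2)
      ≤ 2 * (BF ^ 2 * LG ^ 2 + BG ^ 4 * LF ^ 2) * (1 / (A : ℝ)) *
          ((m : ℝ)⁻¹ * ∑ j, ‖x - φ j‖ ^ 2) := by
  obtain ⟨hBFb, hLFl, hBGb, hGlip, hJlip⟩ := hA2
  have hmR : (0:ℝ) < m := by exact_mod_cast hm
  have hAR : (0:ℝ) < A := by exact_mod_cast hA
  set hvec : Fin m → Euc M := fun j => G j x - G j (φ j) with hhvec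
  set Kvec : Fin m → PiLp 2 (fun _ : Fin N => Euc M) :=
    fun j => colMap (J j x - J j (φ j)) with hKvec
  -- deviation identities
  have hGdev : ∀ σ : Fin A → Fin m, GhatSAGA G σ x φ - Gbar G x
      = (A:ℝ)⁻¹ • ∑ l, hvec (σ l) - (m:ℝ)⁻¹ • ∑ j, hvec j := by
    intro σ
    simp only [GhatSAGA, Gbar, hhvec, Finset.sum_sub_distrib, smul_sub]
    abel
  have hJdev : ∀ σ : Fin A → Fin m, JhatSAGA J σ x φ - Jbar J x
      = (A:ℝ)⁻¹ • ∑ l, (J (σ l) x - J (σ l) (φ (σ l))) - (m:ℝ)⁻¹ • ∑ j, (J j x - J j (φ j)) := by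
    intro σ
    simp only [JhatSAGA, Jbar, Finset.sum_sub_distrib, smul_sub]
    abel
  have hJcol : ∀ σ : Fin A → Fin m, colMap (JhatSAGA J σ x φ - Jbar J x)
      = (A:ℝ)⁻¹ • ∑ l, Kvec (σ l) - (m:ℝ)⁻¹ • ∑ j, Kvec j := by
    intro σ
    rw [hJdev σ]
    simp only [map_sub, map_smul, map_sum, hKvec]
  -- pointwise bound
  have pointwise : ∀ (i : Fin n) (σ : Fin A → Fin m),
      ‖transApp (JhatSAGA J σ x φ) (gradF i (GhatSAGA G σ x φ)) -
        transApp (Jbar J x) (gradF i (Gbar G x))‖ ^ 2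
      ≤ 2 * BF^2 * ‖(A:ℝ)⁻¹ • ∑ l, Kvec (σ l) - (m:ℝ)⁻¹ • ∑ j, Kvec j‖ ^ 2
        + 2 * (BG^2 * LF^2) * ‖(A:ℝ)⁻¹ • ∑ l, hvec (σ l) - (m:ℝ)⁻¹ • ∑ j, hvec j‖ ^ 2 := by
    intro i σ
    set T := JhatSAGA J σ x φ
    set Tb := Jbar J x
    set y := GhatSAGA G σ x φ
    set yb := Gbar G x
    set v := gradF i y
    set vb := gradF i yb
    have hsplit : transApp T v - transApp Tb vb
        = transApp (T - Tb) v + transApp Tb (v - vb) := by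
      simp only [transApp, map_sub, ContinuousLinearMap.sub_apply]
      abel
    have hTb : ‖Tb‖ ≤ BG := by
      refine (opNorm_le_frob Tb).trans ?_
      rw [frob_eq_norm_colMap]
      have : colMap (Tb : Euc N →L[ℝ] Euc M) = (m:ℝ)⁻¹ • ∑ j, colMap (J j x) := by
        simp only [Tb, Jbar, map_smul, map_sum]
      rw [this]
      calc ‖(m:ℝ)⁻¹ • ∑ j, colMap (J j x)‖ ≤ (m:ℝ)⁻¹ * ∑ j, ‖colMap (J j x)‖ := by
            rw [norm_smul, Real.norm_eq_abs, abs_of_nonneg (by positivity)]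
            exact mul_le_mul_of_nonneg_left (norm_sum_le _ _) (by positivity)
        _ ≤ (m:ℝ)⁻¹ * ∑ _j : Fin m, BG := by
            refine mul_le_mul_of_nonneg_left (Finset.sum_le_sum fun j _ => ?_) (by positivity)
            rw [← frob_eq_norm_colMap]
            exact hBGb j x
        _ = BG := by
            rw [Finset.sum_const, Finset.card_univ, Fintype.card_fin, nsmul_eq_mul]
            field_simp
    have h1 : ‖transApp (T - Tb) v‖ ≤ ‖(A:ℝ)⁻¹ • ∑ l, Kvec (σ l) - (m:ℝ)⁻¹ • ∑ j, Kvec j‖ * BF := by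
      calc ‖transApp (T - Tb) v‖ ≤ ‖T - Tb‖ * ‖v‖ := transApp_norm_le _ _
        _ ≤ frobNorm (T - Tb) * BF := by
            apply mul_le_mul (opNorm_le_frob _) (hBFb i y) (norm_nonneg _)
            exact (norm_nonneg _).trans (opNorm_le_frob _)
        _ = ‖(A:ℝ)⁻¹ • ∑ l, Kvec (σ l) - (m:ℝ)⁻¹ • ∑ j, Kvec j‖ * BF := by
            rw [frob_eq_norm_colMap, hJcol σ]
    have h2 : ‖transApp Tb (v - vb)‖
        ≤ BG * (LF * ‖(A:ℝ)⁻¹ • ∑ l, hvec (σ l) - (m:ℝ)⁻¹ • ∑ j, hvec j‖) := by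
      calc ‖transApp Tb (v - vb)‖ ≤ ‖Tb‖ * ‖v - vb‖ := transApp_norm_le _ _
        _ ≤ BG * (LF * ‖y - yb‖) := by
            apply mul_le_mul hTb (hLFl i y yb) (norm_nonneg _) (le_trans (norm_nonneg _) hTb)
        _ = BG * (LF * ‖(A:ℝ)⁻¹ • ∑ l, hvec (σ l) - (m:ℝ)⁻¹ • ∑ j, hvec j‖) := by
            rw [hGdev σ]
    rw [hsplit]
    have htri := norm_add_le (transApp (T - Tb) v) (transApp Tb (v - vb))
    have hnn1 : (0:ℝ) ≤ ‖transApp (T - Tb) v‖ := norm_nonneg _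
    have hnn2 : (0:ℝ) ≤ ‖transApp Tb (v - vb)‖ := norm_nonneg _
    have hnn3 : (0:ℝ) ≤ ‖transApp (T - Tb) v + transApp Tb (v - vb)‖ := norm_nonneg _
    nlinarith [sq_nonneg (‖transApp (T - Tb) v‖ - ‖transApp Tb (v - vb)‖),
      sq_nonneg (‖(A:ℝ)⁻¹ • ∑ l, Kvec (σ l) - (m:ℝ)⁻¹ • ∑ j, Kvec j‖ * BF
        - BG * (LF * ‖(A:ℝ)⁻¹ • ∑ l, hvec (σ l) - (m:ℝ)⁻¹ • ∑ j, hvec j‖))]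
  -- bound each Esig
  have hKb : ∑ j, ‖Kvec j‖ ^ 2 ≤ LG^2 * ∑ j, ‖x - φ j‖ ^ 2 := by
    rw [Finset.mul_sum]
    refine Finset.sum_le_sum fun j _ => ?_
    have : ‖Kvec j‖ ≤ LG * ‖x - φ j‖ := by
      simp only [hKvec]
      rw [← frob_eq_norm_colMap]
      exact hJlip j x (φ j)
    calc ‖Kvec j‖ ^ 2 ≤ (LG * ‖x - φ j‖) ^ 2 := by
          exact pow_le_pow_left₀ (norm_nonneg _) this 2
      _ = LG^2 * ‖x - φ j‖ ^ 2 := by ring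
  have hhb : ∑ j, ‖hvec j‖ ^ 2 ≤ BG^2 * ∑ j, ‖x - φ j‖ ^ 2 := by
    rw [Finset.mul_sum]
    refine Finset.sum_le_sum fun j _ => ?_
    have : ‖hvec j‖ ≤ BG * ‖x - φ j‖ := by
      simp only [hhvec]
      exact hGlip j x (φ j)
    calc ‖hvec j‖ ^ 2 ≤ (BG * ‖x - φ j‖) ^ 2 := by
          exact pow_le_pow_left₀ (norm_nonneg _) this 2
      _ = BG^2 * ‖x - φ j‖ ^ 2 := by ring
  have hvarK := var_bound (m := m) (A := A) hm hA Kvec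
  have hvarh := var_bound (m := m) (A := A) hm hA hvec
  -- single-i bound
  have singleBound : ∀ i : Fin n, Esig (fun σ : Fin A → Fin m =>
      ‖transApp (JhatSAGA J σ x φ) (gradF i (GhatSAGA G σ x φ)) -
        transApp (Jbar J x) (gradF i (Gbar G x))‖ ^ 2)
      ≤ 2 * (BF ^ 2 * LG ^ 2 + BG ^ 4 * LF ^ 2) * (1 / (A : ℝ)) *
          ((m : ℝ)⁻¹ * ∑ j, ‖x - φ j‖ ^ 2) := by
    intro i
    refine (esig_mono hm (pointwise i)).trans ?_
    rw [esig_lincomb]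
    have e1 : Esig (fun σ : Fin A → Fin m =>
        ‖(A:ℝ)⁻¹ • ∑ l, Kvec (σ l) - (m:ℝ)⁻¹ • ∑ j, Kvec j‖ ^ 2)
        ≤ (1/(A:ℝ)) * ((m:ℝ)⁻¹ * (LG^2 * ∑ j, ‖x - φ j‖ ^ 2)) := by
      refine hvarK.trans ?_
      have := mul_le_mul_of_nonneg_left hKb (by positivity : (0:ℝ) ≤ (m:ℝ)⁻¹)
      exact mul_le_mul_of_nonneg_left this (by positivity)
    have e2 : Esig (fun σ : Fin A → Fin m =>
        ‖(A:ℝ)⁻¹ • ∑ l, hvec (σ l) - (m:ℝ)⁻¹ • ∑ j, hvec j‖ ^ 2)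
        ≤ (1/(A:ℝ)) * ((m:ℝ)⁻¹ * (BG^2 * ∑ j, ‖x - φ j‖ ^ 2)) := by
      refine hvarh.trans ?_
      have := mul_le_mul_of_nonneg_left hhb (by positivity : (0:ℝ) ≤ (m:ℝ)⁻¹)
      exact mul_le_mul_of_nonneg_left this (by positivity)
    have c1 : (0:ℝ) ≤ 2 * BF^2 := by positivity
    have c2 : (0:ℝ) ≤ 2 * (BG^2 * LF^2) := by positivity
    calc 2 * BF^2 * Esig (fun σ : Fin A → Fin m =>
          ‖(A:ℝ)⁻¹ • ∑ l, Kvec (σ l) - (m:ℝ)⁻¹ • ∑ j, Kvec j‖ ^ 2)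
        + 2 * (BG^2 * LF^2) * Esig (fun σ : Fin A → Fin m =>
          ‖(A:ℝ)⁻¹ • ∑ l, hvec (σ l) - (m:ℝ)⁻¹ • ∑ j, hvec j‖ ^ 2)
        ≤ 2 * BF^2 * ((1/(A:ℝ)) * ((m:ℝ)⁻¹ * (LG^2 * ∑ j, ‖x - φ j‖ ^ 2)))
          + 2 * (BG^2 * LF^2) * ((1/(A:ℝ)) * ((m:ℝ)⁻¹ * (BG^2 * ∑ j, ‖x - φ j‖ ^ 2))) := by
          exact add_le_add (mul_le_mul_of_nonneg_left e1 c1) (mul_le_mul_of_nonneg_left e2 c2)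
      _ = 2 * (BF ^ 2 * LG ^ 2 + BG ^ 4 * LF ^ 2) * (1 / (A : ℝ)) *
          ((m : ℝ)⁻¹ * ∑ j, ‖x - φ j‖ ^ 2) := by ring
  calc (n : ℝ)⁻¹ * ∑ i, Esig (fun σ : Fin A → Fin m =>
        ‖transApp (JhatSAGA J σ x φ) (gradF i (GhatSAGA G σ x φ)) -
          transApp (Jbar J x) (gradF i (Gbar G x))‖ ^ 2)
      ≤ (n : ℝ)⁻¹ * ∑ _i : Fin n, (2 * (BF ^ 2 * LG ^ 2 + BG ^ 4 * LF ^ 2) * (1 / (A : ℝ)) *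
          ((m : ℝ)⁻¹ * ∑ j, ‖x - φ j‖ ^ 2)) := by
        refine mul_le_mul_of_nonneg_left (Finset.sum_le_sum fun i _ => singleBound i) ?_
        positivity
    _ = 2 * (BF ^ 2 * LG ^ 2 + BG ^ 4 * LF ^ 2) * (1 / (A : ℝ)) *
          ((m : ℝ)⁻¹ * ∑ j, ‖x - φ j‖ ^ 2) := by
        rw [Finset.sum_const, Finset.card_univ, Fintype.card_fin, nsmul_eq_mul]
        have hnR : (0:ℝ) < n := by exact_mod_cast hn
        field_simp
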